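/- For every y ∈ ℝ one has 4π²·∫_ℝ h²·W_φ(y,h) dh = (1/4)·|φ′(y)|² − (1/8)·(φ(y)·φ″(y)* + φ″(y)·φ(y)*) and 4π²·∫_ℝ h²·Y_φ(y,h) dh = (1/4)·((φ′(y))² − φ(y)·φ″(y)). -/

import Mathlib

noncomputable section

open Real MeasureTheory

/-- Fourier transform `φ̂(ξ) = ∫ e^{−2πiξy} φ(y) dy`. -/
def hatFn (φ : SchwartzMap ℝ ℂ) (ξ : ℝ) : ℂ :=
  ∫ y : ℝ, Complex.exp (-2 * π * Complex.I * ξ * y) * φ y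

/-- Wigner function `W_φ(y,h)`. -/
def Wfn (φ : SchwartzMap ℝ ℂ) (y h : ℝ) : ℂ :=
  ∫ η : ℝ, Complex.exp (2 * π * Complex.I * y * η) *
    ((1 / 2) * (starRingEnd ℂ) (hatFn φ (h - η / 2)) * hatFn φ (h + η / 2))

/-- Anti-Wigner function `Y_φ(y,h)`. -/
def Yfn (φ : SchwartzMap ℝ ℂ) (y h : ℝ) : ℂ :=
  ∫ η : ℝ, Complex.exp (2 * π * Complex.I * y * η) *
    ((1 / 2) * hatFn φ (-h + η / 2) * hatFn φ (h + η / 2))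

open FourierTransform SchwartzMap

namespace WignerAux

/-! ### Measure preserving linear changes of variables on `ℝ × ℝ` -/

def e1 : (ℝ×ℝ) ≃ₗ[ℝ] (ℝ×ℝ) where
  toFun p := (p.1 - p.2/2, p.1 + p.2/2)
  invFun q := ((q.1+q.2)/2, q.2 - q.1)
  map_add' p q := by simp [Prod.ext_iff]; constructor <;> ring
  map_smul' c p := by simp [Prod.ext_iff, smul_eq_mul]; constructor <;> ring
  left_inv p := by simp only [Prod.ext_iff]; constructor <;> ring
  right_inv q := by simp only [Prod.ext_iff]; constructor <;> ring

lemma e1_apply (p : ℝ×ℝ) : e1 p = (p.1 - p.2/2, p.1 + p.2/2) := rfl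

def e2 : (ℝ×ℝ) ≃ₗ[ℝ] (ℝ×ℝ) where
  toFun p := (-p.1 + p.2/2, p.1 + p.2/2)
  invFun q := ((q.2-q.1)/2, q.1 + q.2)
  map_add' p q := by simp [Prod.ext_iff]; constructor <;> ring
  map_smul' c p := by simp [Prod.ext_iff, smul_eq_mul]; constructor <;> ring
  left_inv p := by simp only [Prod.ext_iff]; constructor <;> ring
  right_inv q := by simp only [Prod.ext_iff]; constructor <;> ring

lemma e2_apply (p : ℝ×ℝ) : e2 p = (-p.1 + p.2/2, p.1 + p.2/2) := rfl

lemma det_e1 : LinearMap.det (e1 : (ℝ×ℝ) →ₗ[ℝ] (ℝ×ℝ)) = 1 := by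
  rw [← LinearMap.det_toMatrix (Module.Basis.finTwoProd ℝ), Matrix.det_fin_two]
  simp [LinearMap.toMatrix_apply, e1]
  norm_num

lemma det_e2 : LinearMap.det (e2 : (ℝ×ℝ) →ₗ[ℝ] (ℝ×ℝ)) = -1 := by
  rw [← LinearMap.det_toMatrix (Module.Basis.finTwoProd ℝ), Matrix.det_fin_two]
  simp [LinearMap.toMatrix_apply, e2]
  norm_num

def ce1 : (ℝ×ℝ) ≃L[ℝ] (ℝ×ℝ) := e1.toContinuousLinearEquiv
def ce2 : (ℝ×ℝ) ≃L[ℝ] (ℝ×ℝ) := e2.toContinuousLinearEquiv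

lemma mp_e1 : MeasurePreserving (⇑e1) (volume : Measure (ℝ×ℝ)) volume := by
  refine ⟨ce1.continuous.measurable, ?_⟩
  rw [show ⇑e1 = ⇑(e1 : (ℝ×ℝ) →ₗ[ℝ] (ℝ×ℝ)) from rfl,
    Measure.map_linearMap_addHaar_eq_smul_addHaar volume (by rw [det_e1]; norm_num), det_e1]
  simp

lemma mp_e2 : MeasurePreserving (⇑e2) (volume : Measure (ℝ×ℝ)) volume := by
  refine ⟨ce2.continuous.measurable, ?_⟩
  rw [show ⇑e2 = ⇑(e2 : (ℝ×ℝ) →ₗ[ℝ] (ℝ×ℝ)) from rfl,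
    Measure.map_linearMap_addHaar_eq_smul_addHaar volume (by rw [det_e2]; norm_num), det_e2]
  norm_num

lemma emb_e1 : MeasurableEmbedding (⇑e1) := ce1.toHomeomorph.measurableEmbedding
lemma emb_e2 : MeasurableEmbedding (⇑e2) := ce2.toHomeomorph.measurableEmbedding

/-! ### Fourier inversion and moments -/

lemma inv_eq (g : ℝ → ℂ) (y : ℝ) :
    𝓕⁻ g y = ∫ v : ℝ, Complex.exp (2*↑π*Complex.I*↑y*↑v) * g v := by
  rw [Real.fourierInv_eq']
  congr 1; ext v
  rw [smul_eq_mul]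
  congr 1
  simp only [RCLike.inner_apply, starRingEnd_apply, star_trivial]
  push_cast
  ring_nf

lemma inv_schwartz (ρ : 𝓢(ℝ, ℂ)) (y : ℝ) :
    ∫ v : ℝ, Complex.exp (2*↑π*Complex.I*↑y*↑v) * 𝓕 ⇑ρ v = ρ y := by
  rw [← inv_eq]
  have h2 : Integrable (𝓕 ⇑ρ) := by
    rw [← fourier_coe]; exact (𝓕 ρ).integrable
  rw [ρ.continuous.fourierInv_fourier_eq ρ.integrable h2]

lemma deriv_coe (ρ : 𝓢(ℝ, ℂ)) : deriv ⇑ρ = ⇑(derivCLM ℝ ℂ ρ) := by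
  ext x; exact (derivCLM_apply ℝ ρ x).symm

lemma fourier_deriv (ρ : 𝓢(ℝ, ℂ)) :
    𝓕 (⇑(derivCLM ℝ ℂ ρ)) = fun ξ : ℝ => (2*↑π*Complex.I*↑ξ) * 𝓕 ⇑ρ ξ := by
  rw [← deriv_coe]
  have := Real.fourier_deriv ρ.integrable (fun x => ρ.differentiableAt)
    (by rw [deriv_coe]; exact (derivCLM ℝ ℂ ρ).integrable)
  rw [this]
  ext ξ; rw [smul_eq_mul]

/-- the elementary integrands -/
def Kf (ψ : 𝓢(ℝ, ℂ)) (y : ℝ) (j : ℕ) (b : ℝ) : ℂ :=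
  (b:ℂ)^j * Complex.exp (2*↑π*Complex.I*↑y*↑b) * ψ b

def Gf (ψ : 𝓢(ℝ, ℂ)) (y : ℝ) (j : ℕ) (a : ℝ) : ℂ :=
  (a:ℂ)^j * Complex.exp (-(2*↑π*Complex.I*↑y*↑a)) * (starRingEnd ℂ) (ψ a)

lemma intK (ψ : 𝓢(ℝ, ℂ)) (y : ℝ) (j : ℕ) : Integrable (Kf ψ y j) := by
  apply (ψ.integrable_pow_mul volume j).mono'
  · apply Continuous.aestronglyMeasurable
    unfold Kf; fun_prop
  · filter_upwards with ξ
    simp only [Kf, norm_mul, norm_pow, Complex.norm_exp]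
    have : (2*(π:ℂ)*Complex.I*↑y*↑ξ).re = 0 := by simp
    rw [this, Real.exp_zero]
    simp [Real.norm_eq_abs]

lemma intG (ψ : 𝓢(ℝ, ℂ)) (y : ℝ) (j : ℕ) : Integrable (Gf ψ y j) := by
  apply (ψ.integrable_pow_mul volume j).mono'
  · apply Continuous.aestronglyMeasurable
    unfold Gf
    exact ((Complex.continuous_ofReal.pow j).mul (by fun_prop)).mul
      (continuous_star.comp ψ.continuous)
  · filter_upwards with ξ
    simp only [Gf, norm_mul, norm_pow, Complex.norm_exp]
    have : (-(2*(π:ℂ)*Complex.I*↑y*↑ξ)).re = 0 := by simp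
    rw [this, Real.exp_zero]
    simp [Real.norm_eq_abs]

lemma Gf_eq_conj (ψ : 𝓢(ℝ, ℂ)) (y : ℝ) (j : ℕ) (a : ℝ) :
    Gf ψ y j a = (starRingEnd ℂ) (Kf ψ y j a) := by
  unfold Gf Kf
  rw [map_mul, map_mul, ← Complex.exp_conj]
  congr 2
  · rw [map_pow, Complex.conj_ofReal]
  · simp [Complex.conj_I, map_ofNat]

lemma intG_eq (ψ : 𝓢(ℝ, ℂ)) (y : ℝ) (j : ℕ) :
    ∫ a : ℝ, Gf ψ y j a = (starRingEnd ℂ) (∫ b : ℝ, Kf ψ y j b) := by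
  rw [← integral_conj]
  simp_rw [Gf_eq_conj]

end WignerAux

open WignerAux

section Moments

variable (φ : SchwartzMap ℝ ℂ) (y : ℝ)

lemma hat_eq (ξ : ℝ) : hatFn φ ξ = fourierTransformCLM ℂ φ ξ := by
  rw [fourierTransformCLM_apply, fourier_coe, Real.fourier_eq']
  unfold hatFn
  congr 1; ext v
  rw [smul_eq_mul]
  congr 1
  simp only [RCLike.inner_apply, starRingEnd_apply, star_trivial]
  push_cast
  ring_nf

lemma mom0 : ∫ v : ℝ, Kf (fourierTransformCLM ℂ φ) y 0 v = φ y := by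
  have := inv_schwartz φ y
  rw [← this]
  congr 1; ext v
  simp [Kf, fourierTransformCLM_apply, fourier_coe]

lemma mom1 : ∫ v : ℝ, Kf (fourierTransformCLM ℂ φ) y 1 v
    = (2*↑π*Complex.I)⁻¹ * deriv (⇑φ) y := by
  have h2pi : (2*↑π*Complex.I : ℂ) ≠ 0 := by
    simp [Real.pi_ne_zero, Complex.I_ne_zero]
  have hinv := inv_schwartz (derivCLM ℝ ℂ φ) y
  rw [fourier_deriv] at hinv
  have hL : ∫ v : ℝ, Complex.exp (2*↑π*Complex.I*↑y*↑v) * ((2*↑π*Complex.I*↑v) * 𝓕 ⇑φ v)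
      = (2*↑π*Complex.I) * ∫ v : ℝ, Kf (fourierTransformCLM ℂ φ) y 1 v := by
    rw [← integral_const_mul]
    congr 1; ext v
    simp only [Kf, fourierTransformCLM_apply, pow_one, fourier_coe]
    ring
  rw [hL] at hinv
  rw [← deriv_coe] at hinv
  field_simp
  linear_combination hinv

lemma mom2 : ∫ v : ℝ, Kf (fourierTransformCLM ℂ φ) y 2 v
    = ((2*↑π*Complex.I)^2)⁻¹ * deriv (deriv (⇑φ)) y := by
  have h2pi : ((2*↑π*Complex.I)^2 : ℂ) ≠ 0 := by
    simp [Real.pi_ne_zero, Complex.I_ne_zero]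
  have hinv := inv_schwartz (derivCLM ℝ ℂ (derivCLM ℝ ℂ φ)) y
  rw [fourier_deriv] at hinv
  have hL : ∫ v : ℝ, Complex.exp (2*↑π*Complex.I*↑y*↑v) * ((2*↑π*Complex.I*↑v) * 𝓕 ⇑(derivCLM ℝ ℂ φ) v)
      = ((2*↑π*Complex.I)^2) * ∫ v : ℝ, Kf (fourierTransformCLM ℂ φ) y 2 v := by
    simp_rw [fourier_deriv φ]
    rw [← integral_const_mul]
    congr 1; ext v
    simp only [Kf, fourierTransformCLM_apply, fourier_coe]
    ring
  rw [hL] at hinv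
  rw [← deriv_coe, ← deriv_coe] at hinv
  field_simp
  linear_combination hinv

end Moments

theorem wigner_second_moments (φ : SchwartzMap ℝ ℂ) (y : ℝ) :
    ((4 * π ^ 2 : ℝ) : ℂ) * (∫ h : ℝ, (h : ℂ) ^ 2 * Wfn φ y h)
      = (((1 / 4) * ‖deriv (⇑φ) y‖ ^ 2 : ℝ) : ℂ)
        - (1 / 8) * (φ y * (starRingEnd ℂ) (deriv (deriv (⇑φ)) y)
            + deriv (deriv (⇑φ)) y * (starRingEnd ℂ) (φ y)) ∧
    ((4 * π ^ 2 : ℝ) : ℂ) * (∫ h : ℝ, (h : ℂ) ^ 2 * Yfn φ y h)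
      = (1 / 4) * ((deriv (⇑φ) y) ^ 2 - φ y * deriv (deriv (⇑φ)) y) := by
  set ψ : 𝓢(ℝ, ℂ) := fourierTransformCLM ℂ φ with hψ
  have hK := intK ψ y
  have hG := intG ψ y
  have hM0 : ∫ v : ℝ, Kf ψ y 0 v = φ y := mom0 φ y
  have hM1 : ∫ v : ℝ, Kf ψ y 1 v = (2*↑π*Complex.I)⁻¹ * deriv (⇑φ) y := mom1 φ y
  have hM2 : ∫ v : ℝ, Kf ψ y 2 v = ((2*↑π*Complex.I)^2)⁻¹ * deriv (deriv (⇑φ)) y := mom2 φ y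
  have hN := intG_eq ψ y
  have hWmain : (∫ h : ℝ, (h : ℂ) ^ 2 * Wfn φ y h)
      = (1/8) * ((∫ a : ℝ, Gf ψ y 2 a) * (∫ b : ℝ, Kf ψ y 0 b)
          + 2 * ((∫ a : ℝ, Gf ψ y 1 a) * (∫ b : ℝ, Kf ψ y 1 b))
          + (∫ a : ℝ, Gf ψ y 0 a) * (∫ b : ℝ, Kf ψ y 2 b)) := by
    set GW : ℝ×ℝ → ℂ := fun p => (1/8) * (Gf ψ y 2 p.1 * Kf ψ y 0 p.2
        + 2 * (Gf ψ y 1 p.1 * Kf ψ y 1 p.2) + Gf ψ y 0 p.1 * Kf ψ y 2 p.2) with hGW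
    have hGWint : Integrable GW := by
      rw [hGW, Measure.volume_eq_prod]
      exact ((((hG 2).mul_prod (hK 0)).add (((hG 1).mul_prod (hK 1)).const_mul 2)).add
        ((hG 0).mul_prod (hK 2))).const_mul _
    have step1 : (fun h : ℝ => (h:ℂ)^2 * Wfn φ y h) = fun h => ∫ η : ℝ, GW (e1 (h, η)) := by
      funext h
      unfold Wfn
      rw [← integral_const_mul]
      congr 1; funext η
      rw [hat_eq φ, hat_eq φ, ← hψ]
      simp only [hGW, e1_apply]
      rw [show Complex.exp (2 * ↑π * Complex.I * ↑y * ↑η)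
          = Complex.exp (-(2*↑π*Complex.I*↑y*↑(h - η/2)))
            * Complex.exp (2*↑π*Complex.I*↑y*↑(h + η/2)) by
        rw [← Complex.exp_add]; congr 1; push_cast; ring]
      simp only [Gf, Kf]
      push_cast
      ring
    rw [show (∫ h : ℝ, (h : ℂ) ^ 2 * Wfn φ y h) = ∫ h : ℝ, ∫ η : ℝ, GW (e1 (h, η)) from by
      rw [← step1]]
    have huncurry : Integrable (Function.uncurry fun h η : ℝ => GW (e1 (h, η)))
        (volume.prod volume) := by
      have h1 := (mp_e1.integrable_comp_emb emb_e1).2 hGWint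
      rw [Measure.volume_eq_prod] at h1
      exact h1
    rw [integral_integral huncurry]
    rw [show (∫ z : ℝ×ℝ, GW (e1 (z.1, z.2)) ∂(volume.prod volume))
        = ∫ p : ℝ×ℝ, GW (e1 p) from by rw [← Measure.volume_eq_prod]]
    rw [mp_e1.integral_comp emb_e1 GW, hGW, Measure.volume_eq_prod, integral_const_mul]
    congr 1
    have i1 : Integrable (fun z : ℝ×ℝ => Gf ψ y 2 z.1 * Kf ψ y 0 z.2) (volume.prod volume) :=
      (hG 2).mul_prod (hK 0)
    have i2 : Integrable (fun z : ℝ×ℝ => 2 * (Gf ψ y 1 z.1 * Kf ψ y 1 z.2)) (volume.prod volume) :=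
      ((hG 1).mul_prod (hK 1)).const_mul 2
    have i3 : Integrable (fun z : ℝ×ℝ => Gf ψ y 0 z.1 * Kf ψ y 2 z.2) (volume.prod volume) :=
      (hG 0).mul_prod (hK 2)
    rw [integral_add (show Integrable (fun z : ℝ×ℝ => Gf ψ y 2 z.1 * Kf ψ y 0 z.2
        + 2 * (Gf ψ y 1 z.1 * Kf ψ y 1 z.2)) (volume.prod volume) from i1.add i2) i3,
      integral_add i1 i2, integral_const_mul, integral_prod_mul, integral_prod_mul,
      integral_prod_mul]
  have hYmain : (∫ h : ℝ, (h : ℂ) ^ 2 * Yfn φ y h)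
      = (1/8) * ((∫ a : ℝ, Kf ψ y 2 a) * (∫ b : ℝ, Kf ψ y 0 b)
          - 2 * ((∫ a : ℝ, Kf ψ y 1 a) * (∫ b : ℝ, Kf ψ y 1 b))
          + (∫ a : ℝ, Kf ψ y 0 a) * (∫ b : ℝ, Kf ψ y 2 b)) := by
    set GY : ℝ×ℝ → ℂ := fun p => (1/8) * (Kf ψ y 2 p.1 * Kf ψ y 0 p.2
        - 2 * (Kf ψ y 1 p.1 * Kf ψ y 1 p.2) + Kf ψ y 0 p.1 * Kf ψ y 2 p.2) with hGY
    have hGYint : Integrable GY := by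
      rw [hGY, Measure.volume_eq_prod]
      exact ((((hK 2).mul_prod (hK 0)).sub (((hK 1).mul_prod (hK 1)).const_mul 2)).add
        ((hK 0).mul_prod (hK 2))).const_mul _
    have step1 : (fun h : ℝ => (h:ℂ)^2 * Yfn φ y h) = fun h => ∫ η : ℝ, GY (e2 (h, η)) := by
      funext h
      unfold Yfn
      rw [← integral_const_mul]
      congr 1; funext η
      rw [hat_eq φ, hat_eq φ, ← hψ]
      simp only [hGY, e2_apply]
      rw [show Complex.exp (2 * ↑π * Complex.I * ↑y * ↑η)
          = Complex.exp (2*↑π*Complex.I*↑y*↑(-h + η/2))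
            * Complex.exp (2*↑π*Complex.I*↑y*↑(h + η/2)) by
        rw [← Complex.exp_add]; congr 1; push_cast; ring]
      simp only [Kf]
      push_cast
      ring
    rw [show (∫ h : ℝ, (h : ℂ) ^ 2 * Yfn φ y h) = ∫ h : ℝ, ∫ η : ℝ, GY (e2 (h, η)) from by
      rw [← step1]]
    have huncurry : Integrable (Function.uncurry fun h η : ℝ => GY (e2 (h, η)))
        (volume.prod volume) := by
      have h1 := (mp_e2.integrable_comp_emb emb_e2).2 hGYint
      rw [Measure.volume_eq_prod] at h1
      exact h1
    rw [integral_integral huncurry]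
    rw [show (∫ z : ℝ×ℝ, GY (e2 (z.1, z.2)) ∂(volume.prod volume))
        = ∫ p : ℝ×ℝ, GY (e2 p) from by rw [← Measure.volume_eq_prod]]
    rw [mp_e2.integral_comp emb_e2 GY, hGY, Measure.volume_eq_prod, integral_const_mul]
    congr 1
    have i1 : Integrable (fun z : ℝ×ℝ => Kf ψ y 2 z.1 * Kf ψ y 0 z.2) (volume.prod volume) :=
      (hK 2).mul_prod (hK 0)
    have i2 : Integrable (fun z : ℝ×ℝ => 2 * (Kf ψ y 1 z.1 * Kf ψ y 1 z.2)) (volume.prod volume) :=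
      ((hK 1).mul_prod (hK 1)).const_mul 2
    have i3 : Integrable (fun z : ℝ×ℝ => Kf ψ y 0 z.1 * Kf ψ y 2 z.2) (volume.prod volume) :=
      (hK 0).mul_prod (hK 2)
    rw [integral_add (show Integrable (fun z : ℝ×ℝ => Kf ψ y 2 z.1 * Kf ψ y 0 z.2
        - 2 * (Kf ψ y 1 z.1 * Kf ψ y 1 z.2)) (volume.prod volume) from i1.sub i2) i3,
      integral_sub i1 i2, integral_const_mul, integral_prod_mul, integral_prod_mul,
      integral_prod_mul]
  have hπ : (π : ℂ) ≠ 0 := Complex.ofReal_ne_zero.2 Real.pi_ne_zero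
  have hI := Complex.I_ne_zero
  set A := φ y
  set B := deriv (⇑φ) y
  set C := deriv (deriv (⇑φ)) y
  have h4 : ((2*↑π*Complex.I)^2 : ℂ) = -(4*(π:ℂ)^2) := by
    rw [mul_pow, mul_pow, Complex.I_sq]; ring
  have h4' : (2*(π:ℂ)*Complex.I) * (2*(π:ℂ)*Complex.I) = -(4*(π:ℂ)^2) := by
    rw [← sq, h4]
  have habs : (((1 / 4) * ‖B‖ ^ 2 : ℝ) : ℂ) = (1/4) * (B * (starRingEnd ℂ) B) := by
    rw [Complex.sq_norm, Complex.ofReal_mul, ← Complex.mul_conj]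
    norm_num
  constructor
  · rw [hWmain, hN 2, hN 1, hN 0, hM0, hM1, hM2, habs, h4]
    simp only [map_mul, map_inv₀, map_neg, map_ofNat, Complex.conj_I, Complex.conj_ofReal,
      map_pow]
    field_simp
    rw [Complex.I_sq]
    push_cast
    ring
  · rw [hYmain, hM0, hM1, hM2, h4]
    field_simp
    rw [Complex.I_sq]
    push_cast
    ring
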